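/- Let n ≥ 1 be an integer and suppose that T_{ab}^n(0,1) has first coordinate 0, or that T_{ab}^n(0,−1) has first coordinate 0. Then there is a nonzero real number λ such that T_{ab}^n(0,1) = (0, λ) or T_{ab}^n(0,−1) = (0, −λ⁻¹). Moreover: (i) if λ > 0, then both relations T_{ab}^n(0,1) = (0, λ) and T_{ab}^n(0,−1) = (0, −λ⁻¹) hold, one also has T_{ab}^n(−1,0) = (−λ, 0) and T_{ab}^n(1,0) = (λ⁻¹, 0), and T_{ab} has a periodic ray; (ii) if λ < 0, then necessarily λ = −1, and in the case T_{ab}^n(0,1) = (0,−1) one also has T_{ab}^n(−1,0) = (1,0), while in the case T_{ab}^n(0,−1) = (0,1) one also has T_{ab}^n(1,0) = (−1,0). -/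

import Mathlib

open Filter Set MeasureTheory

/-- The piecewise slope function: `Fab a b x = a` if `x ≥ 0`, `b` if `x < 0`. -/
noncomputable def Fab (a b x : ℝ) : ℝ := if 0 ≤ x then a else b

/-- The piecewise-linear area-preserving map `T_{ab}(x,y) = (F_{ab}(x)·x − y, x)`,
packaged as a permutation of `ℝ²` (with its explicit inverse). -/
noncomputable def Tab (a b : ℝ) : Equiv.Perm (ℝ × ℝ) where
  toFun p := (Fab a b p.1 * p.1 - p.2, p.1)
  invFun p := (p.2, Fab a b p.2 * p.2 - p.1)
  left_inv p := by simp
  right_inv p := by simp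

/-- A nonzero vector `v` is a periodic ray of `T_{ab}` if `T_{ab}^n v = λ • v`
for some `n ≥ 1` and some `λ > 0`. -/
def IsPeriodicRay (a b : ℝ) (v : ℝ × ℝ) : Prop :=
  v ≠ 0 ∧ ∃ n : ℕ, 1 ≤ n ∧ ∃ l : ℝ, 0 < l ∧ ((Tab a b) ^ n) v = l • v

lemma Tab_apply (a b : ℝ) (p : ℝ × ℝ) :
    Tab a b p = (Fab a b p.1 * p.1 - p.2, p.1) := rfl

lemma Tab_zero_snd (a b c : ℝ) : Tab a b ((0:ℝ), c) = (-c, 0) := by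
  simp [Tab_apply]

lemma Fab_mul_pos (a b t x : ℝ) (ht : 0 < t) : Fab a b (t * x) = Fab a b x := by
  unfold Fab
  rcases le_or_gt 0 x with hx | hx
  · rw [if_pos hx, if_pos (mul_nonneg ht.le hx)]
  · rw [if_neg (not_le.2 hx), if_neg (not_le.2 (mul_neg_of_pos_of_neg ht hx))]

lemma Tab_smul (a b t : ℝ) (ht : 0 ≤ t) (p : ℝ × ℝ) :
    Tab a b (t • p) = t • Tab a b p := by
  rcases ht.eq_or_lt with h | h
  · rw [← h]; simp [Tab_apply]
  · have hsp : t • p = (t * p.1, t * p.2) := rfl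
    have hf := Fab_mul_pos a b t p.1 h
    rw [hsp, Tab_apply, Tab_apply, hf]
    simp only [Prod.smul_mk, smul_eq_mul, Prod.mk.injEq]
    exact ⟨by ring, trivial⟩

lemma Tab_pow_smul (a b t : ℝ) (ht : 0 ≤ t) : ∀ (n : ℕ) (p : ℝ × ℝ),
    ((Tab a b) ^ n) (t • p) = t • ((Tab a b) ^ n) p
  | 0, p => rfl
  | n+1, p => by
    rw [pow_succ', Equiv.Perm.mul_apply, Equiv.Perm.mul_apply,
      Tab_pow_smul a b t ht n p, Tab_smul a b t ht]

lemma Tab_swap_step (a b : ℝ) (q : ℝ × ℝ) :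
    Tab a b ((Tab a b q).swap) = q.swap := by
  have h1 : (Tab a b q).swap = (q.1, Fab a b q.1 * q.1 - q.2) := rfl
  rw [h1, Tab_apply]
  have h2 : q.swap = (q.2, q.1) := rfl
  rw [h2]
  simp only [Prod.mk.injEq]
  exact ⟨by ring, trivial⟩

lemma Tab_pow_swap (a b : ℝ) : ∀ (n : ℕ) (p : ℝ × ℝ),
    ((Tab a b) ^ n) ((((Tab a b) ^ n) p).swap) = p.swap
  | 0, p => rfl
  | n+1, p => by
    have h1 : ((Tab a b) ^ (n+1)) p = Tab a b (((Tab a b) ^ n) p) := by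
      rw [pow_succ']; rfl
    have h2 : ∀ x, ((Tab a b) ^ (n+1)) x = ((Tab a b) ^ n) (Tab a b x) := by
      intro x; rw [pow_succ]; rfl
    rw [h1, h2, Tab_swap_step, Tab_pow_swap a b n p]

lemma Tab_pow_zero (a b : ℝ) : ∀ n : ℕ, ((Tab a b) ^ n) ((0:ℝ), (0:ℝ)) = (0, 0)
  | 0 => rfl
  | n+1 => by
    have h2 : ∀ x, ((Tab a b) ^ (n+1)) x = ((Tab a b) ^ n) (Tab a b x) := by
      intro x; rw [pow_succ]; rfl
    rw [h2]
    have : Tab a b ((0:ℝ), (0:ℝ)) = (0, 0) := by simp [Tab_apply]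
    rw [this, Tab_pow_zero a b n]

lemma eq_of_Tab_eq (a b u : ℝ) (p : ℝ × ℝ) (h : Tab a b p = (u, 0)) : p = (0, -u) := by
  have h1 : p.1 = 0 := congrArg Prod.snd h
  have h2 : Fab a b p.1 * p.1 - p.2 = u := congrArg Prod.fst h
  rw [h1, mul_zero, zero_sub] at h2
  have h3 : p.2 = -u := by linarith
  rw [← h1, ← h3]

/-- if `T_{ab}^n(0,1)` or `T_{ab}^n(0,−1)` lands on the `y`-axis, then the
dichotomy of Theorem 3.4 of part I holds. -/
theorem Tab_y_axis_dichotomy (a b : ℝ) (n : ℕ) (hn : 1 ≤ n)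
    (h : (((Tab a b) ^ n) ((0:ℝ), (1:ℝ))).1 = 0 ∨ (((Tab a b) ^ n) ((0:ℝ), (-1:ℝ))).1 = 0) :
    ∃ l : ℝ, l ≠ 0 ∧
      (((Tab a b) ^ n) ((0:ℝ), (1:ℝ)) = ((0:ℝ), l) ∨
        ((Tab a b) ^ n) ((0:ℝ), (-1:ℝ)) = ((0:ℝ), -l⁻¹)) ∧
      (0 < l →
        ((Tab a b) ^ n) ((0:ℝ), (1:ℝ)) = ((0:ℝ), l) ∧
        ((Tab a b) ^ n) ((0:ℝ), (-1:ℝ)) = ((0:ℝ), -l⁻¹) ∧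
        ((Tab a b) ^ n) ((-1:ℝ), (0:ℝ)) = ((-l : ℝ), (0:ℝ)) ∧
        ((Tab a b) ^ n) ((1:ℝ), (0:ℝ)) = ((l⁻¹ : ℝ), (0:ℝ)) ∧
        (∃ v, IsPeriodicRay a b v)) ∧
      (l < 0 → l = -1 ∧
        (((Tab a b) ^ n) ((0:ℝ), (1:ℝ)) = ((0:ℝ), (-1:ℝ)) →
          ((Tab a b) ^ n) ((-1:ℝ), (0:ℝ)) = ((1:ℝ), (0:ℝ))) ∧
        (((Tab a b) ^ n) ((0:ℝ), (-1:ℝ)) = ((0:ℝ), (1:ℝ)) →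
          ((Tab a b) ^ n) ((1:ℝ), (0:ℝ)) = ((-1:ℝ), (0:ℝ)))) := by
  obtain ⟨m, rfl⟩ : ∃ m, n = m + 1 := ⟨n - 1, (Nat.succ_pred_eq_of_pos hn).symm⟩
  have happly : ∀ p : ℝ × ℝ, ((Tab a b) ^ (m+1)) p = ((Tab a b) ^ m) (Tab a b p) := by
    intro p; rw [pow_succ]; rfl
  have happly' : ∀ p : ℝ × ℝ, ((Tab a b) ^ (m+1)) p = Tab a b (((Tab a b) ^ m) p) := by
    intro p; rw [pow_succ']; rfl
  have hT01 : Tab a b ((0:ℝ), (1:ℝ)) = (-1, 0) := by simp [Tab_apply]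
  have hT0m1 : Tab a b ((0:ℝ), (-1:ℝ)) = (1, 0) := by simp [Tab_apply]
  have e1 : ((Tab a b) ^ (m+1)) ((0:ℝ), (1:ℝ)) = ((Tab a b) ^ m) ((-1:ℝ), (0:ℝ)) := by
    rw [happly, hT01]
  have e2 : ((Tab a b) ^ (m+1)) ((0:ℝ), (-1:ℝ)) = ((Tab a b) ^ m) ((1:ℝ), (0:ℝ)) := by
    rw [happly, hT0m1]
  have e3 : ((Tab a b) ^ (m+1)) ((-1:ℝ), (0:ℝ))
      = Tab a b (((Tab a b) ^ (m+1)) ((0:ℝ), (1:ℝ))) := by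
    rw [happly' ((-1:ℝ), (0:ℝ)), ← e1]
  have e4 : ((Tab a b) ^ (m+1)) ((1:ℝ), (0:ℝ))
      = Tab a b (((Tab a b) ^ (m+1)) ((0:ℝ), (-1:ℝ))) := by
    rw [happly' ((1:ℝ), (0:ℝ)), ← e2]
  have imp1 : ((Tab a b) ^ (m+1)) ((0:ℝ), (1:ℝ)) = ((0:ℝ), (-1:ℝ)) →
      ((Tab a b) ^ (m+1)) ((-1:ℝ), (0:ℝ)) = ((1:ℝ), (0:ℝ)) := by
    intro hh; rw [e3, hh, hT0m1]
  have imp2 : ((Tab a b) ^ (m+1)) ((0:ℝ), (-1:ℝ)) = ((0:ℝ), (1:ℝ)) →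
      ((Tab a b) ^ (m+1)) ((1:ℝ), (0:ℝ)) = ((-1:ℝ), (0:ℝ)) := by
    intro hh; rw [e4, hh, hT01]
  rcases h with h1 | h2
  · -- case: T^n(0,1) lands on the y-axis
    set s := (((Tab a b) ^ (m+1)) ((0:ℝ), (1:ℝ))).2 with hsdef
    have hs : ((Tab a b) ^ (m+1)) ((0:ℝ), (1:ℝ)) = (0, s) :=
      Prod.ext_iff.2 ⟨h1, rfl⟩
    have hsne : s ≠ 0 := by
      intro h0
      have hz : ((Tab a b) ^ (m+1)) ((0:ℝ), (1:ℝ)) = ((Tab a b) ^ (m+1)) ((0:ℝ), (0:ℝ)) := by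
        rw [hs, h0, Tab_pow_zero]
      have := Equiv.injective _ hz
      simpa using this
    have hrev : ((Tab a b) ^ (m+1)) ((s:ℝ), (0:ℝ)) = ((1:ℝ), (0:ℝ)) := by
      have hk := Tab_pow_swap a b (m+1) ((0:ℝ), (1:ℝ))
      rw [hs] at hk
      simpa using hk
    have hminus : ((Tab a b) ^ (m+1)) ((-1:ℝ), (0:ℝ)) = (-s, 0) := by
      rw [e3, hs, Tab_zero_snd]
    rcases lt_or_gt_of_ne hsne with hneg | hpos
    · -- s < 0 : show s = -1
      have hsmul := Tab_pow_smul a b (-s) (by linarith) (m+1) ((-1:ℝ), (0:ℝ))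
      have hA : (-s) • ((-1:ℝ), (0:ℝ)) = ((s:ℝ), (0:ℝ)) := by
        simp [Prod.smul_mk]
      rw [hA, hrev, hminus] at hsmul
      have hsq : (1:ℝ) = -s * -s := by
        have := congrArg Prod.fst hsmul
        simpa using this
      have hs1 : s = -1 := by nlinarith [sq_nonneg (s+1), sq_nonneg (s-1)]
      refine ⟨-1, by norm_num, Or.inl (by rw [hs, hs1]), ?_, ?_⟩
      · intro hc; norm_num at hc
      · intro _; exact ⟨rfl, imp1, imp2⟩
    · -- s > 0
      have hone : ((Tab a b) ^ (m+1)) ((1:ℝ), (0:ℝ)) = (s⁻¹, 0) := by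
        have hsmul := Tab_pow_smul a b s hpos.le (m+1) ((1:ℝ), (0:ℝ))
        have hA : s • ((1:ℝ), (0:ℝ)) = ((s:ℝ), (0:ℝ)) := by simp
        rw [hA, hrev] at hsmul
        have hX : s⁻¹ • ((1:ℝ), (0:ℝ)) = ((Tab a b) ^ (m+1)) ((1:ℝ), (0:ℝ)) :=
          (inv_smul_eq_iff₀ hpos.ne').2 hsmul
        rw [← hX]; simp
      have hneg1 : ((Tab a b) ^ (m+1)) ((0:ℝ), (-1:ℝ)) = (0, -s⁻¹) := by
        apply eq_of_Tab_eq
        rw [← e4, hone]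
      refine ⟨s, hsne, Or.inl hs, fun _ => ⟨hs, hneg1, hminus, hone,
        ⟨((0:ℝ), (1:ℝ)), by norm_num [Prod.ext_iff], m+1, hn, s, hpos, by
          rw [hs]; simp⟩⟩, fun hc => absurd hpos (by linarith)⟩
  · -- case: T^n(0,-1) lands on the y-axis
    set t := (((Tab a b) ^ (m+1)) ((0:ℝ), (-1:ℝ))).2 with htdef
    have ht : ((Tab a b) ^ (m+1)) ((0:ℝ), (-1:ℝ)) = (0, t) :=
      Prod.ext_iff.2 ⟨h2, rfl⟩
    have htne : t ≠ 0 := by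
      intro h0
      have hz : ((Tab a b) ^ (m+1)) ((0:ℝ), (-1:ℝ)) = ((Tab a b) ^ (m+1)) ((0:ℝ), (0:ℝ)) := by
        rw [ht, h0, Tab_pow_zero]
      have := Equiv.injective _ hz
      simpa using this
    have hrev : ((Tab a b) ^ (m+1)) ((t:ℝ), (0:ℝ)) = ((-1:ℝ), (0:ℝ)) := by
      have hk := Tab_pow_swap a b (m+1) ((0:ℝ), (-1:ℝ))
      rw [ht] at hk
      simpa using hk
    have hplus : ((Tab a b) ^ (m+1)) ((1:ℝ), (0:ℝ)) = (-t, 0) := by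
      rw [e4, ht, Tab_zero_snd]
    rcases lt_or_gt_of_ne htne with hneg | hpos
    · -- t < 0, l = -t⁻¹ > 0
      have hlpos : 0 < -t⁻¹ := by
        have : t⁻¹ < 0 := inv_lt_zero.2 hneg
        linarith
      have hminusB : ((Tab a b) ^ (m+1)) ((-1:ℝ), (0:ℝ)) = (t⁻¹, 0) := by
        have hsmul := Tab_pow_smul a b (-t) (by linarith) (m+1) ((-1:ℝ), (0:ℝ))
        have hA : (-t) • ((-1:ℝ), (0:ℝ)) = ((t:ℝ), (0:ℝ)) := by simp [Prod.smul_mk]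
        rw [hA, hrev] at hsmul
        have hX : (-t)⁻¹ • ((-1:ℝ), (0:ℝ)) = ((Tab a b) ^ (m+1)) ((-1:ℝ), (0:ℝ)) :=
          (inv_smul_eq_iff₀ (by linarith : (-t:ℝ) ≠ 0)).2 hsmul
        rw [← hX]
        simp [Prod.smul_mk, inv_neg]
      have h01B : ((Tab a b) ^ (m+1)) ((0:ℝ), (1:ℝ)) = (0, -t⁻¹) := by
        apply eq_of_Tab_eq
        rw [← e3, hminusB]
      refine ⟨-t⁻¹, hlpos.ne', Or.inl h01B, fun _ => ⟨h01B, ?_, ?_, ?_,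
        ⟨((0:ℝ), (1:ℝ)), by norm_num [Prod.ext_iff], m+1, hn, -t⁻¹, hlpos, by
          rw [h01B]; simp⟩⟩, fun hc => absurd hlpos (by linarith)⟩
      · rw [ht]; norm_num [inv_neg, inv_inv]
      · rw [hminusB]; norm_num
      · rw [hplus]; norm_num [inv_neg, inv_inv, htne]
    · -- t > 0 : show t = 1, l = -1
      have hsmul := Tab_pow_smul a b t hpos.le (m+1) ((1:ℝ), (0:ℝ))
      have hA : t • ((1:ℝ), (0:ℝ)) = ((t:ℝ), (0:ℝ)) := by simp
      rw [hA, hrev, hplus] at hsmul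
      have hsq : (-1:ℝ) = t * -t := by
        have := congrArg Prod.fst hsmul
        simpa using this
      have ht1 : t = 1 := by nlinarith [sq_nonneg (t+1), sq_nonneg (t-1)]
      refine ⟨-1, by norm_num, Or.inr (by rw [ht, ht1]; norm_num), ?_, ?_⟩
      · intro hc; norm_num at hc
      · intro _; exact ⟨rfl, imp1, imp2⟩
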